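/- Let A be a real symmetric n×n matrix whose graph G(A) is acyclic (contains no cycle). Define the matrix N(A) by N(A)_ij = a_ij if i = j or a_ij < 0, and N(A)_ij = 0 otherwise. Then the following are equivalent: (a) A is copositive; (b) A is SPN; (c) N(A) is positive semidefinite. -/

import Mathlib

open Matrix

/-- A real symmetric matrix `A` is *copositive* if `xᵀAx ≥ 0` for every
entrywise nonnegative vector `x`. -/
def Copositive {ι : Type*} [Fintype ι] (A : Matrix ι ι ℝ) : Prop :=
  ∀ x : ι → ℝ, (∀ i, 0 ≤ x i) → 0 ≤ x ⬝ᵥ A.mulVec x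

/-- A real symmetric matrix is *SPN* if it is the sum of a positive semidefinite
matrix and a symmetric entrywise nonnegative matrix. -/
def IsSPN {ι : Type*} [Fintype ι] (A : Matrix ι ι ℝ) : Prop :=
  ∃ P N : Matrix ι ι ℝ, P.PosSemidef ∧ N.IsSymm ∧ (∀ i j, 0 ≤ N i j) ∧ A = P + N

/-- The graph `G(A)` of a symmetric real matrix: `i ≠ j` are adjacent iff `A i j ≠ 0`. -/
def matrixGraph {ι : Type*} (A : Matrix ι ι ℝ) : SimpleGraph ι where
  Adj i j := i ≠ j ∧ (A i j ≠ 0 ∨ A j i ≠ 0)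
  symm := by
    constructor
    intro i j h
    exact ⟨h.1.symm, h.2.symm⟩
  loopless := by
    constructor
    intro i h
    exact h.1 rfl

/-- A graph `G` is an *SPN graph* if every copositive symmetric real matrix whose graph
is isomorphic to `G` is SPN. -/
def IsSPNGraph {V : Type*} [Fintype V] (G : SimpleGraph V) : Prop :=
  ∀ (n : ℕ) (A : Matrix (Fin n) (Fin n) ℝ), A.IsSymm → Copositive A →
    Nonempty (matrixGraph A ≃g G) → IsSPN A

/-- The negative-edge graph of a symmetric matrix. -/
private def negGraph {n : ℕ} (A : Matrix (Fin n) (Fin n) ℝ) (hA : A.IsSymm) :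
    SimpleGraph (Fin n) where
  Adj i j := i ≠ j ∧ A i j < 0
  symm := by
    constructor
    intro i j h
    refine ⟨h.1.symm, ?_⟩
    rw [hA.apply i j]
    exact h.2
  loopless := by
    constructor
    intro i h
    exact h.1 rfl

/-- SPN implies copositive. -/
private lemma isSPN_copositive {n : ℕ} {A : Matrix (Fin n) (Fin n) ℝ}
    (h : IsSPN A) : Copositive A := by
  obtain ⟨P, M, hP, hMs, hM0, rfl⟩ := h
  intro x hx
  have h1 : 0 ≤ x ⬝ᵥ P.mulVec x := by
    have := hP.dotProduct_mulVec_nonneg x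
    simpa using this
  have h2 : 0 ≤ x ⬝ᵥ M.mulVec x := by
    simp only [dotProduct, mulVec, Finset.mul_sum]
    refine Finset.sum_nonneg fun i _ => Finset.sum_nonneg fun j _ => ?_
    exact mul_nonneg (hx i) (mul_nonneg (hM0 i j) (hx j))
  calc (0:ℝ) ≤ x ⬝ᵥ P.mulVec x + x ⬝ᵥ M.mulVec x := add_nonneg h1 h2
    _ = x ⬝ᵥ (P + M).mulVec x := by rw [add_mulVec, dotProduct_add]

/-- If N(A) is PSD then A is SPN. -/
private lemma negPart_psd_isSPN {n : ℕ} {A : Matrix (Fin n) (Fin n) ℝ} (hA : A.IsSymm)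
    (h : (Matrix.of fun i j => if i = j ∨ A i j < 0 then A i j else 0).PosSemidef) :
    IsSPN A := by
  set N : Matrix (Fin n) (Fin n) ℝ :=
    Matrix.of fun i j => if i = j ∨ A i j < 0 then A i j else 0 with hN
  refine ⟨N, A - N, h, ?_, ?_, by abel⟩
  · rw [Matrix.IsSymm]
    ext i j
    simp only [transpose_apply, Matrix.sub_apply, hN, of_apply]
    rw [hA.apply i j]
    by_cases hij : i = j
    · subst hij; rfl
    · simp [hij, Ne.symm hij]
  · intro i j
    simp only [Matrix.sub_apply, hN, of_apply]
    by_cases hc : i = j ∨ A i j < 0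
    · simp [hc]
    · push_neg at hc
      simp only [if_neg (not_or.mpr ⟨hc.1, not_lt.mpr hc.2⟩), sub_zero]
      exact hc.2

/-- The hard direction: copositive with acyclic graph implies N(A) is PSD. -/
private lemma copositive_negPart_psd {n : ℕ} {A : Matrix (Fin n) (Fin n) ℝ} (hA : A.IsSymm)
    (hacyclic : (matrixGraph A).IsAcyclic) (hcop : Copositive A) :
    (Matrix.of fun i j => if i = j ∨ A i j < 0 then A i j else 0).PosSemidef := by
  classical
  set N : Matrix (Fin n) (Fin n) ℝ :=
    Matrix.of fun i j => if i = j ∨ A i j < 0 then A i j else 0 with hN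
  set G : SimpleGraph (Fin n) := negGraph A hA with hG
  haveI : DecidableRel G.Adj := Classical.decRel _
  have hle : G ≤ matrixGraph A := by
    intro i j hij
    exact ⟨hij.1, Or.inl (ne_of_lt hij.2)⟩
  -- a positive entry cannot join two vertices in the same negative component
  have key : ∀ i j : Fin n, G.connectedComponentMk i = G.connectedComponentMk j →
      i ≠ j → ¬ A i j < 0 → A i j = 0 := by
    intro i j hc hij hneg
    by_contra h0
    have hpos : 0 < A i j := lt_of_le_of_ne (not_lt.mp hneg) (Ne.symm h0)
    have hreach : G.Reachable j i := (SimpleGraph.ConnectedComponent.eq.mp hc).symm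
    obtain ⟨w⟩ := hreach
    have hadj : (matrixGraph A).Adj i j := ⟨hij, Or.inl (ne_of_gt hpos)⟩
    set q := (w.mapLe hle).bypass with hq'
    have hq : q.IsPath := SimpleGraph.Walk.bypass_isPath _
    have hedge : ¬ s(i, j) ∈ q.edges := by
      intro hmem
      have h1 : s(i, j) ∈ (w.mapLe hle).edges :=
        SimpleGraph.Walk.edges_bypass_subset _ hmem
      have h2 : s(i, j) ∈ w.edges := by
        simpa [SimpleGraph.Walk.mapLe, SimpleGraph.Walk.edges_map, Sym2.map_id'] using h1
      have hGadj : G.Adj i j := w.adj_of_mem_edges h2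
      exact hneg hGadj.2
    exact hacyclic _ (SimpleGraph.Path.cons_isCycle ⟨q, hq⟩ hadj hedge)
  -- N is symmetric
  have hNsymm : ∀ i j, N j i = N i j := by
    intro i j
    simp only [hN, of_apply]
    rw [hA.apply i j]
    by_cases hij : i = j
    · subst hij; rfl
    · simp [hij, Ne.symm hij]
  -- N offdiagonal entries are nonpositive
  have hNoffdiag : ∀ i j, i ≠ j → N i j ≤ 0 := by
    intro i j hij
    simp only [hN, of_apply]
    by_cases hlt : A i j < 0
    · simp [hlt, le_of_lt hlt]
    · simp [hij, hlt]
  -- N is copositive, by splitting x along negative components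
  have hNcop : ∀ x : Fin n → ℝ, (∀ i, 0 ≤ x i) → 0 ≤ x ⬝ᵥ N.mulVec x := by
    intro x hx
    set y : G.ConnectedComponent → Fin n → ℝ :=
      fun c i => if G.connectedComponentMk i = c then x i else 0 with hy
    have expand : x ⬝ᵥ N.mulVec x = ∑ c : G.ConnectedComponent, y c ⬝ᵥ A.mulVec (y c) := by
      have hmid : ∑ c : G.ConnectedComponent, y c ⬝ᵥ A.mulVec (y c) =
          ∑ i, ∑ j, (if G.connectedComponentMk i = G.connectedComponentMk j then
            x i * (A i j * x j) else 0) := by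
        simp only [dotProduct, mulVec, Finset.mul_sum]
        rw [Finset.sum_comm]
        refine Finset.sum_congr rfl fun i _ => ?_
        rw [Finset.sum_comm]
        refine Finset.sum_congr rfl fun j _ => ?_
        simp only [hy, ite_mul, zero_mul, mul_ite, mul_zero]
        rw [Finset.sum_ite_eq]
        by_cases hc : G.connectedComponentMk i = G.connectedComponentMk j
        · simp [hc]
        · simp [hc, fun h => hc (Eq.symm h)]
      rw [hmid]
      simp only [dotProduct, mulVec, Finset.mul_sum]
      refine Finset.sum_congr rfl fun i _ => ?_
      refine Finset.sum_congr rfl fun j _ => ?_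
      by_cases hij : i = j
      · subst hij
        simp [hN]
      · by_cases hlt : A i j < 0
        · have hadj : G.Adj i j := ⟨hij, hlt⟩
          have hc : G.connectedComponentMk i = G.connectedComponentMk j :=
            SimpleGraph.ConnectedComponent.eq.mpr hadj.reachable
          simp [hc, hN, hlt]
        · have hNij : N i j = 0 := by simp [hN, hij, hlt]
          rw [hNij]
          by_cases hc : G.connectedComponentMk i = G.connectedComponentMk j
          · rw [if_pos hc, key i j hc hij hlt]
            try ring
          · rw [if_neg hc]
            ring
    rw [expand]
    refine Finset.sum_nonneg fun c _ => ?_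
    refine hcop (y c) fun i => ?_
    simp only [hy]
    by_cases hc : G.connectedComponentMk i = c
    · simp [hc, hx i]
    · simp [hc]
  refine posSemidef_iff_dotProduct_mulVec.mpr ⟨?_, ?_⟩
  · rw [Matrix.IsHermitian]
    ext i j
    simp only [conjTranspose_apply, star_trivial]
    exact hNsymm i j
  · intro z
    have hstar : star z = z := by
      funext i
      simp
    rw [hstar]
    have habs : 0 ≤ (fun i => |z i|) ⬝ᵥ N.mulVec (fun i => |z i|) :=
      hNcop _ fun i => abs_nonneg _
    refine le_trans habs ?_
    simp only [dotProduct, mulVec, Finset.mul_sum]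
    refine Finset.sum_le_sum fun i _ => Finset.sum_le_sum fun j _ => ?_
    by_cases hij : i = j
    · subst hij
      have : |z i| * (N i i * |z i|) = N i i * (|z i| * |z i|) := by ring
      rw [this, abs_mul_abs_self]
      ring_nf
      exact le_refl _
    · have hNij : N i j ≤ 0 := hNoffdiag i j hij
      have h1 : |z i| * (N i j * |z j|) = N i j * |z i * z j| := by
        rw [abs_mul]; ring
      have h2 : N i j * |z i * z j| ≤ N i j * (z i * z j) :=
        mul_le_mul_of_nonpos_left (le_abs_self _) hNij
      calc |z i| * (N i j * |z j|) = N i j * |z i * z j| := h1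
        _ ≤ N i j * (z i * z j) := h2
        _ = z i * (N i j * z j) := by ring

/-- For a symmetric real matrix `A` whose graph is acyclic, the following
are equivalent: (a) `A` is copositive; (b) `A` is SPN; (c) the matrix `N(A)` keeping
the diagonal and the negative entries of `A` (other entries replaced by `0`) is
positive semidefinite. -/
theorem acyclic_copositive_iff_isSPN_iff_negPart_posSemidef
    (n : ℕ) (A : Matrix (Fin n) (Fin n) ℝ) (hA : A.IsSymm)
    (hacyclic : (matrixGraph A).IsAcyclic) :
    (Copositive A ↔ IsSPN A) ∧
    (IsSPN A ↔
      (Matrix.of fun i j => if i = j ∨ A i j < 0 then A i j else 0).PosSemidef) := by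
  constructor
  · constructor
    · intro hcop
      exact negPart_psd_isSPN hA (copositive_negPart_psd hA hacyclic hcop)
    · exact isSPN_copositive
  · constructor
    · intro hs
      exact copositive_negPart_psd hA hacyclic (isSPN_copositive hs)
    · exact negPart_psd_isSPN hA
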